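/- Let (d_i)_{i≥1} be a sequence of positive reals with z := inf_{i≥1} d_i > 0. Then for every x ≥ 0 the series ∑_{i=1}^∞ d_i·∏_{j=1}^i x/(x+d_j) converges and its sum equals x. -/

import Mathlib

/-- If `(d_i)_{i≥1}` are positive reals with positive infimum, then for every `x ≥ 0` the
series `∑_{i=1}^∞ d_i·∏_{j=1}^i x/(x+d_j)` converges with sum `x`. -/
theorem silicosis_series_sum_x' (d : ℕ → ℝ) (hd : ∀ i : ℕ, 1 ≤ i → 0 < d i)
    (hz : 0 < ⨅ i : ℕ, d (i + 1)) (x : ℝ) (hx : 0 ≤ x) :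
    HasSum (fun i : ℕ => d (i + 1) * ∏ j ∈ Finset.Icc 1 (i + 1), x / (x + d j)) x := by
  set z : ℝ := ⨅ i : ℕ, d (i + 1) with hzdef
  have hbdd : BddBelow (Set.range fun i : ℕ => d (i + 1)) := by
    refine ⟨0, ?_⟩
    rintro y ⟨i, rfl⟩
    exact (hd (i + 1) (Nat.le_add_left 1 i)).le
  have hzle : ∀ i : ℕ, z ≤ d (i + 1) := fun i => ciInf_le hbdd i
  have hfac_nonneg : ∀ j : ℕ, 1 ≤ j → 0 ≤ x / (x + d j) := fun j hj =>
    div_nonneg hx (by linarith [hd j hj])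
  set Q : ℕ → ℝ := fun n => ∏ j ∈ Finset.Icc 1 n, x / (x + d j) with hQdef
  have hQ_nonneg : ∀ n, 0 ≤ Q n := fun n =>
    Finset.prod_nonneg fun j hj => hfac_nonneg j (Finset.mem_Icc.mp hj).1
  -- partial sums telescope
  have hpartial : ∀ n : ℕ,
      ∑ i ∈ Finset.range n, d (i + 1) * ∏ j ∈ Finset.Icc 1 (i + 1), x / (x + d j)
        = x * (1 - Q n) := by
    intro n
    induction n with
    | zero => simp [hQdef]
    | succ n ih =>
        rw [Finset.sum_range_succ, ih]
        have hQs : Q (n + 1) = Q n * (x / (x + d (n + 1))) :=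
          Finset.prod_Icc_succ_top (Nat.le_add_left 1 n) _
        have hq1 : d (n + 1) * ∏ j ∈ Finset.Icc 1 (n + 1), x / (x + d j)
            = d (n + 1) * Q (n + 1) := rfl
        rw [hq1, hQs]
        have hdn : 0 < d (n + 1) := hd (n + 1) (Nat.le_add_left 1 n)
        have hne : x + d (n + 1) ≠ 0 := by linarith
        generalize Q n = q
        field_simp
        ring
    -- convert to tendsto
  rw [hasSum_iff_tendsto_nat_of_nonneg (fun i => mul_nonneg
      (hd (i + 1) (Nat.le_add_left 1 i)).le
      (Finset.prod_nonneg fun j hj => hfac_nonneg j (Finset.mem_Icc.mp hj).1))]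
  simp only [hpartial]
  rcases eq_or_lt_of_le hx with hx0 | hxpos
  · have : ∀ n, x * (1 - Q n) = x := by intro n; rw [← hx0]; ring
    simp only [this]
    exact tendsto_const_nhds
  · -- x > 0 : Q n ≤ r^n with r = x/(x+z) < 1
    set r : ℝ := x / (x + z) with hrdef
    have hr0 : 0 ≤ r := div_nonneg hx (by linarith)
    have hr1 : r < 1 := (div_lt_one (by linarith)).mpr (by linarith)
    have hQle : ∀ n, Q n ≤ r ^ n := by
      intro n
      have : Q n ≤ ∏ _j ∈ Finset.Icc 1 n, r := by
        refine Finset.prod_le_prod (fun j hj => hfac_nonneg j (Finset.mem_Icc.mp hj).1) ?_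
        intro j hj
        obtain ⟨hj1, _⟩ := Finset.mem_Icc.mp hj
        obtain ⟨k, rfl⟩ := Nat.exists_eq_add_of_le hj1
        have : z ≤ d (1 + k) := by simpa [add_comm] using hzle k
        exact div_le_div_of_nonneg_left hx (by linarith) (by linarith)
      simpa [Nat.card_Icc] using this
    have hQ0 : Filter.Tendsto Q Filter.atTop (nhds 0) := by
      refine squeeze_zero hQ_nonneg hQle (tendsto_pow_atTop_nhds_zero_of_lt_one hr0 hr1)
    have := ((tendsto_const_nhds (x := (1:ℝ))).sub hQ0).const_mul x
    simpa using this
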